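/- Let n : ℕ and let S : Matrix (Fin n × Fin n) (Fin n × Fin n) ℂ be the swap operator, S ((i, j), (k, l)) = if i = l ∧ j = k then 1 else 0. Then: (a) S is positive on pure tensors; indeed for all x y : Fin n → ℂ, star (x ⊗ y) ⬝ᵥ S.mulVec (x ⊗ y) = ‖∑_i star (x i) * y i‖², a nonnegative real; (b) if n ≥ 2, S is not positive semidefinite. -/

import Mathlib

open Matrix ComplexOrder

/-- The pure tensor of two vectors: `(x ⊗ y) (i, j) = x i * y j`. -/
def tensVec {n : ℕ} (x y : Fin n → ℂ) : Fin n × Fin n → ℂ := fun p => x p.1 * y p.2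

/-- The swap operator `S ((i,j),(k,l)) = δ_{il} δ_{jk}`. -/
def swapOp (n : ℕ) : Matrix (Fin n × Fin n) (Fin n × Fin n) ℂ :=
  Matrix.of fun p q => if p.1 = q.2 ∧ p.2 = q.1 then 1 else 0

lemma swapOp_mulVec {n : ℕ} (v : Fin n × Fin n → ℂ) (p : Fin n × Fin n) :
    (swapOp n).mulVec v p = v (p.2, p.1) := by
  rw [Matrix.mulVec]
  have key : ∀ q : Fin n × Fin n, swapOp n p q * v q =
      if q = (p.2, p.1) then v (p.2, p.1) else 0 := by
    intro q
    simp only [swapOp, Matrix.of_apply]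
    rcases q with ⟨a, b⟩
    by_cases h : p.1 = b ∧ p.2 = a
    · obtain ⟨h1, h2⟩ := h
      subst h1 h2
      simp
    · rw [if_neg h, if_neg, zero_mul]
      intro hq
      obtain ⟨ha, hb⟩ := Prod.ext_iff.1 hq
      exact h ⟨hb.symm, ha.symm⟩
  simp only [dotProduct, key]
  simp

/-- The swap operator is positive on pure tensors (with value `|⟨x, y⟩|²`),
but for `n ≥ 2` it is not positive semidefinite. -/
theorem swap_POPT_not_posSemidef (n : ℕ) :
    (∀ x y : Fin n → ℂ,
      star (tensVec x y) ⬝ᵥ (swapOp n).mulVec (tensVec x y)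
        = ((‖∑ i, star (x i) * y i‖ ^ 2 : ℝ) : ℂ)) ∧
    (2 ≤ n → ¬ (swapOp n).PosSemidef) := by
  constructor
  · intro x y
    have h1 : star (tensVec x y) ⬝ᵥ (swapOp n).mulVec (tensVec x y)
        = (∑ i, star (x i) * y i) * (∑ j, star (y j) * x j) := by
      simp only [dotProduct, swapOp_mulVec, tensVec, Pi.star_apply, star_mul']
      rw [Fintype.sum_prod_type, Finset.sum_mul_sum]
      exact Finset.sum_congr rfl fun i _ => Finset.sum_congr rfl fun j _ => by ring
    rw [h1]
    have h2 : (∑ j, star (y j) * x j) = star (∑ i, star (x i) * y i) := by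
      rw [star_sum]
      exact Finset.sum_congr rfl fun i _ => by simp [mul_comm]
    rw [h2]
    set z := ∑ i, star (x i) * y i
    rw [Complex.star_def, Complex.mul_conj']
    push_cast
    ring
  · intro hn hPSD
    set i0 : Fin n := ⟨0, by omega⟩ with hi0
    set i1 : Fin n := ⟨1, by omega⟩ with hi1
    have h0 : i0 ≠ i1 := by simp [hi0, hi1, Fin.ext_iff]
    set v : Fin n × Fin n → ℂ := fun p =>
      if p = (i0, i1) then 1 else if p = (i1, i0) then -1 else 0 with hv
    have key : star v ⬝ᵥ (swapOp n).mulVec v = -2 := by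
      simp only [dotProduct, swapOp_mulVec]
      have hterm : ∀ p : Fin n × Fin n, star (v p) * v (p.2, p.1) =
          if p = (i0, i1) then -1 else if p = (i1, i0) then -1 else 0 := by
        intro p
        by_cases h1 : p = (i0, i1)
        · subst h1
          simp [hv, h0, h0.symm, Prod.ext_iff]
        · by_cases h2 : p = (i1, i0)
          · subst h2
            simp [hv, h0, h0.symm, Prod.ext_iff]
          · rw [if_neg h1, if_neg h2]
            have hvp : v p = 0 := by rw [hv]; simp [h1, h2]
            rw [show star (v p) = 0 by rw [hvp]; simp, zero_mul]
      calc ∑ p : Fin n × Fin n, star v p * v (p.2, p.1)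
          = ∑ p : Fin n × Fin n,
            (if p = (i0, i1) then (-1 : ℂ) else if p = (i1, i0) then -1 else 0) :=
            Finset.sum_congr rfl fun p _ => hterm p
        _ = -2 := by
            have hsplit : ∀ p : Fin n × Fin n,
                (if p = (i0, i1) then (-1 : ℂ) else if p = (i1, i0) then -1 else 0)
                = (if p = (i0, i1) then (-1 : ℂ) else 0)
                  + (if p = (i1, i0) then (-1 : ℂ) else 0) := by
              intro p
              split_ifs with ha hb <;> simp_all [Prod.ext_iff]
            rw [Finset.sum_congr rfl fun p _ => hsplit p, Finset.sum_add_distrib,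
              Finset.sum_ite_eq' Finset.univ ((i0, i1) : Fin n × Fin n) (fun _ => (-1 : ℂ)),
              Finset.sum_ite_eq' Finset.univ ((i1, i0) : Fin n × Fin n) (fun _ => (-1 : ℂ))]
            simp
            ring
    have hle := hPSD.dotProduct_mulVec_nonneg v
    rw [key] at hle
    have : (0 : ℝ) ≤ -2 := by
      rw [Complex.le_def] at hle
      simpa using hle.1
    linarith
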